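/- For m ≥ 2 and any n ≥ 0, c_m(m^3·n) ≡ c_m(m·n) (mod m). -/

import Mathlib

noncomputable def cm (m n : ℕ) : ℕ :=
  Nat.card {f : ℕ →₀ ℕ // (∑ i ∈ f.support, f i * m ^ i = n) ∧
    ∀ i k, f i ≠ 0 → k ≤ i → f k ≠ 0}

namespace CmAux

noncomputable def down (f : ℕ →₀ ℕ) : ℕ →₀ ℕ :=
  Finsupp.comapDomain Nat.succ f (fun _ _ _ _ h => Nat.succ_injective h)

@[simp] lemma down_apply (f : ℕ →₀ ℕ) (i : ℕ) : down f i = f (i + 1) := rfl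

noncomputable def up (g : ℕ →₀ ℕ) : ℕ →₀ ℕ :=
  Finsupp.embDomain ⟨Nat.succ, Nat.succ_injective⟩ g

@[simp] lemma up_apply_succ (g : ℕ →₀ ℕ) (i : ℕ) : up g (i + 1) = g i :=
  Finsupp.embDomain_apply_self _ g i

@[simp] lemma up_apply_zero (g : ℕ →₀ ℕ) : up g 0 = 0 :=
  Finsupp.embDomain_notin_range _ g 0 (by simp [Nat.succ_ne_zero])

def sumf (m : ℕ) (f : ℕ →₀ ℕ) : ℕ := ∑ i ∈ f.support, f i * m ^ i

def P (m n : ℕ) (f : ℕ →₀ ℕ) : Prop :=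
  sumf m f = n ∧ ∀ i k, f i ≠ 0 → k ≤ i → f k ≠ 0

lemma cm_eq (m n : ℕ) : cm m n = Nat.card {f // P m n f} := rfl

lemma sumf_eq (m : ℕ) (f : ℕ →₀ ℕ) :
    sumf m f = f 0 + m * sumf m (down f) := by
  classical
  have h1 : m * sumf m (down f) = ∑ i ∈ (down f).support, f (i+1) * m ^ (i+1) := by
    rw [sumf, Finset.mul_sum]
    refine Finset.sum_congr rfl fun i _ => ?_
    simp [pow_succ]
    ring
  have h2 : ∑ i ∈ (down f).support, f (i+1) * m ^ (i+1)
      = ∑ j ∈ f.support.erase 0, f j * m ^ j := by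
    refine Finset.sum_nbij' (fun i => i + 1) (fun j => j - 1) ?_ ?_ ?_ ?_ ?_
    · intro a ha
      simp only [Finsupp.mem_support_iff, down_apply] at ha
      simp [Finset.mem_erase, Finsupp.mem_support_iff, ha]
    · intro a ha
      simp only [Finset.mem_erase, Finsupp.mem_support_iff] at ha
      simp only [Finsupp.mem_support_iff, down_apply]
      rw [Nat.sub_add_cancel (Nat.one_le_iff_ne_zero.2 ha.1)]
      exact ha.2
    · intro a _; simp
    · intro a ha
      simp only [Finset.mem_erase] at ha
      omega
    · intro a _; rfl
  rw [h1, h2]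
  by_cases h0 : 0 ∈ f.support
  · rw [sumf, ← Finset.add_sum_erase _ _ h0]
    simp
  · rw [Finset.erase_eq_of_notMem h0, sumf]
    have : f 0 = 0 := by simpa [Finsupp.mem_support_iff] using h0
    simp [this]

lemma down_single_add_up (v : ℕ) (g : ℕ →₀ ℕ) :
    down (Finsupp.single 0 v + up g) = g := by
  ext i
  simp [Finsupp.single_apply]

lemma f_zero_pos {m n : ℕ} {f : ℕ →₀ ℕ} (hP : P m (n + 1) f) : f 0 ≠ 0 := by
  obtain ⟨hs, hg⟩ := hP
  have : f.support.Nonempty := by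
    rw [Finset.nonempty_iff_ne_empty]
    intro h
    rw [sumf, h] at hs
    simp at hs
  obtain ⟨i, hi⟩ := this
  exact hg i 0 (Finsupp.mem_support_iff.1 hi) (Nat.zero_le _)

noncomputable def mkF (m n k : ℕ) (g : ℕ →₀ ℕ) : ℕ →₀ ℕ :=
  Finsupp.single 0 (n + 1 - m * k) + up g

lemma mkF_P {m n k : ℕ} (hm : 2 ≤ m) (hk : k ≤ n / m) {g : ℕ →₀ ℕ} (hg : P m k g) :
    P m (n + 1) (mkF m n k g) := by
  obtain ⟨hgs, hgap⟩ := hg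
  have hmk : m * k ≤ n := by
    have h := (Nat.le_div_iff_mul_le (k := m) (by omega)).1 hk
    rw [Nat.mul_comm]; exact h
  constructor
  · have h1 := sumf_eq m (mkF m n k g)
    have h2 : down (mkF m n k g) = g := down_single_add_up _ _
    rw [h2] at h1
    have h3 : mkF m n k g 0 = n + 1 - m * k := by simp [mkF]
    rw [h1, h3, hgs]
    omega
  · intro i j hi hj
    rcases Nat.eq_zero_or_pos j with rfl | hj0
    · have hv : mkF m n k g 0 = n + 1 - m * k := by simp [mkF]
      rw [hv]
      omega
    · obtain ⟨j', rfl⟩ : ∃ j', j = j' + 1 := ⟨j - 1, by omega⟩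
      obtain ⟨i', rfl⟩ : ∃ i', i = i' + 1 := ⟨i - 1, by omega⟩
      have hi' : g i' ≠ 0 := by simpa [mkF, Finsupp.single_apply] using hi
      have h2 := hgap i' j' hi' (by omega)
      have hv : mkF m n k g (j' + 1) = g j' := by simp [mkF, Finsupp.single_apply]
      rw [hv]
      exact h2

lemma down_le {m n : ℕ} (hm : 2 ≤ m) {f : ℕ →₀ ℕ} (hP : P m (n + 1) f) :
    sumf m (down f) ≤ n / m := by
  have h1 := sumf_eq m f
  have h2 := hP.1
  have h3 := f_zero_pos hP
  have h4 : m * sumf m (down f) ≤ n := by omega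
  have h5 : sumf m (down f) * m ≤ n := by rw [Nat.mul_comm]; exact h4
  exact (Nat.le_div_iff_mul_le (by omega)).2 h5

lemma down_P {m n : ℕ} {f : ℕ →₀ ℕ} (hP : P m (n + 1) f) :
    P m (sumf m (down f)) (down f) := by
  refine ⟨rfl, fun i j hi hj => ?_⟩
  exact hP.2 (i + 1) (j + 1) (by simpa using hi) (by omega)

lemma sigma_ext (m : ℕ) {K : ℕ} {k₁ k₂ : ℕ} (h₁ : k₁ < K) (h₂ : k₂ < K)
    {g₁ g₂ : ℕ →₀ ℕ} (p₁ : P m k₁ g₁) (p₂ : P m k₂ g₂) (hk : k₁ = k₂) (hgg : g₁ = g₂) :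
    (⟨⟨k₁, h₁⟩, ⟨g₁, p₁⟩⟩ : Σ k : Fin K, {g // P m (k : ℕ) g}) = ⟨⟨k₂, h₂⟩, ⟨g₂, p₂⟩⟩ := by
  subst hk; subst hgg; rfl

/-- The recurrence equivalence. -/
noncomputable def recEquiv (m n : ℕ) (hm : 2 ≤ m) :
    {f // P m (n + 1) f} ≃ (Σ k : Fin (n / m + 1), {g // P m (k : ℕ) g}) where
  toFun f := ⟨⟨sumf m (down f.1), Nat.lt_succ_of_le (down_le hm f.2)⟩, ⟨down f.1, down_P f.2⟩⟩
  invFun x := ⟨mkF m n x.1 x.2.1, mkF_P hm (Nat.lt_succ_iff.1 x.1.2) x.2.2⟩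
  left_inv f := by
    apply Subtype.ext
    have h1 := sumf_eq m f.1
    have h2 := f.2.1
    ext i
    rcases i with _ | i
    · simp [mkF]
      omega
    · simp [mkF, Finsupp.single_apply]
  right_inv x := by
    obtain ⟨⟨k, hk⟩, ⟨g, hg, hgap⟩⟩ := x
    simp only [Fin.val_mk] at hg hgap
    have hd : down (mkF m n k g) = g := down_single_add_up _ _
    exact sigma_ext m _ _ _ _ (by rw [hd, hg]) hd


lemma apply_le {m n : ℕ} {f : ℕ →₀ ℕ} (hm : 2 ≤ m) (hs : sumf m f = n) (i : ℕ) :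
    f i ≤ n := by
  by_cases h : f i = 0
  · omega
  · have hi : i ∈ f.support := Finsupp.mem_support_iff.2 h
    have h1 : f i * m ^ i ≤ n := hs ▸ Finset.single_le_sum (f := fun j => f j * m ^ j)
      (fun j _ => Nat.zero_le _) hi
    have h2 : 1 ≤ m ^ i := Nat.one_le_pow _ _ (by omega)
    calc f i = f i * 1 := by ring
    _ ≤ f i * m ^ i := Nat.mul_le_mul_left _ h2
    _ ≤ n := h1

lemma apply_eq_zero {m n : ℕ} {f : ℕ →₀ ℕ} (hm : 2 ≤ m) (hs : sumf m f = n)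
    {i : ℕ} (hi : n < i) : f i = 0 := by
  by_contra h
  have hmem : i ∈ f.support := Finsupp.mem_support_iff.2 h
  have h1 : f i * m ^ i ≤ n := hs ▸ Finset.single_le_sum (f := fun j => f j * m ^ j)
    (fun j _ => Nat.zero_le _) hmem
  have h2 : m ^ i ≤ f i * m ^ i := Nat.le_mul_of_pos_left _ (Nat.pos_of_ne_zero h)
  have h3 : i < 2 ^ i := Nat.lt_two_pow_self
  have h4 : 2 ^ i ≤ m ^ i := Nat.pow_le_pow_left hm i
  omega

lemma finite_P (m n : ℕ) (hm : 2 ≤ m) : Finite {f // P m n f} := by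
  have : Function.Injective (fun f : {f // P m n f} => fun i : Fin (n + 1) =>
      (⟨f.1 i, Nat.lt_succ_of_le (apply_le hm f.2.1 i)⟩ : Fin (n + 1))) := by
    intro f g hfg
    ext i
    by_cases hi : i ≤ n
    · have := congrFun hfg ⟨i, Nat.lt_succ_of_le hi⟩
      simpa using congrArg Fin.val this
    · rw [apply_eq_zero hm f.2.1 (by omega), apply_eq_zero hm g.2.1 (by omega)]
  exact Finite.of_injective _ this

lemma cm_zero (m : ℕ) (hm : 2 ≤ m) : cm m 0 = 1 := by
  rw [cm_eq]
  haveI : Unique {f // P m 0 f} := {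
    default := ⟨0, by simp [P, sumf], by simp⟩
    uniq := by
      rintro ⟨f, hs, hg⟩
      have hf : f = 0 := by
        ext i
        by_contra h
        have hmem : i ∈ f.support := Finsupp.mem_support_iff.2 (by simpa using h)
        have h1 : f i * m ^ i ≤ 0 := hs ▸ Finset.single_le_sum (f := fun j => f j * m ^ j)
          (fun j _ => Nat.zero_le _) hmem
        have h2 : 0 < m ^ i := Nat.one_le_pow _ _ (by omega)
        have h3 : 0 < f i := Nat.pos_of_ne_zero (by simpa using h)
        have := Nat.mul_pos h3 h2
        omega
      exact Subtype.ext hf }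
  exact Nat.card_unique


lemma cm_succ (m n : ℕ) (hm : 2 ≤ m) :
    cm m (n + 1) = ∑ k ∈ Finset.range (n / m + 1), cm m k := by
  rw [cm_eq, Nat.card_congr (recEquiv m n hm)]
  haveI : ∀ i : Fin (n / m + 1), Fintype {g // P m (i : ℕ) g} :=
    fun i => @Fintype.ofFinite _ (finite_P m i hm)
  rw [Nat.card_eq_fintype_card, Fintype.card_sigma]
  rw [← Fin.sum_univ_eq_sum_range (fun k => cm m k)]
  refine Finset.sum_congr rfl fun i _ => ?_
  rw [cm_eq, Nat.card_eq_fintype_card]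

def crec (m : ℕ) : ℕ → ℕ
  | 0 => 1
  | n + 1 => ∑ k ∈ (Finset.range (n / m + 1)).attach, crec m k
decreasing_by
  have hk := k.2
  simp only [Finset.mem_range] at hk
  have := Nat.div_le_self n m
  omega

lemma crec_succ (m n : ℕ) :
    crec m (n + 1) = ∑ k ∈ Finset.range (n / m + 1), crec m k := by
  rw [crec]
  exact Finset.sum_attach _ _

lemma cm_eq_crec (m : ℕ) (hm : 2 ≤ m) : ∀ n, cm m n = crec m n := by
  intro n
  induction n using Nat.strong_induction_on with
  | _ n ih =>
    match n with
    | 0 => rw [cm_zero m hm, crec]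
    | n + 1 =>
      rw [cm_succ m n hm, crec_succ]
      refine Finset.sum_congr rfl fun k hk => ?_
      simp only [Finset.mem_range] at hk
      have := Nat.div_le_self n m
      exact ih k (by omega)

/-- Partial sums of crec, in ZMod m. -/
noncomputable def T (m N : ℕ) : ZMod m := ∑ k ∈ Finset.range N, (crec m k : ZMod m)

lemma cast_crec_succ (m n : ℕ) : ((crec m (n + 1) : ℕ) : ZMod m) = T m (n / m + 1) := by
  rw [crec_succ, T]
  push_cast
  rfl

lemma T_one (m : ℕ) : T m 1 = 1 := by
  simp [T, crec]

lemma div_aux (m N : ℕ) (hm : 2 ≤ m) (hN : 1 ≤ N) : (m * N - 1) / m = N - 1 := by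
  have h1 : m * N = m * (N - 1) + m := by
    conv_lhs => rw [show N = (N - 1) + 1 by omega]
    rw [Nat.mul_add, Nat.mul_one]
  have h2 : m * N - 1 = (m - 1) + m * (N - 1) := by omega
  rw [h2, Nat.add_mul_div_left _ _ (by omega : 0 < m), Nat.div_eq_of_lt (by omega)]
  omega

lemma cast_crec_mul (m N : ℕ) (hm : 2 ≤ m) (hN : 1 ≤ N) :
    ((crec m (m * N) : ℕ) : ZMod m) = T m N := by
  have h : m * N = (m * N - 1) + 1 := by
    have : 1 ≤ m * N := by
      calc 1 = 1 * 1 := by ring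
      _ ≤ m * N := Nat.mul_le_mul (by omega) hN
    omega
  rw [h, cast_crec_succ, div_aux m N hm hN]
  congr 1
  omega

lemma T_key (m : ℕ) (hm : 2 ≤ m) : ∀ N, 1 ≤ N → T m (m * N) = 1 - T m N := by
  intro N hN
  induction N, hN using Nat.le_induction with
  | base =>
    rw [Nat.mul_one, T]
    rw [show Finset.range m = Finset.range ((m - 1) + 1) from by congr 1; omega,
      Finset.sum_range_succ' (fun k => ((crec m k : ℕ) : ZMod m))]
    have h1 : ∀ t ∈ Finset.range (m - 1), ((crec m (t + 1) : ℕ) : ZMod m) = 1 := by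
      intro t ht
      simp only [Finset.mem_range] at ht
      rw [cast_crec_succ, Nat.div_eq_of_lt (by omega), T_one]
    rw [Finset.sum_congr rfl h1, Finset.sum_const, Finset.card_range]
    have : ((crec m 0 : ℕ) : ZMod m) = 1 := by simp [crec]
    rw [this, nsmul_eq_mul]
    have h2 : ((m - 1 : ℕ) : ZMod m) * 1 + 1 = ((m : ℕ) : ZMod m) := by
      push_cast [Nat.cast_sub (by omega : 1 ≤ m)]
      ring
    rw [h2, ZMod.natCast_self, T_one]
    ring
  | succ N hN ih =>
    have ihN := ih
    have hmul : m * (N + 1) = m * N + m := by ring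
    rw [hmul, T, Finset.sum_range_add, ← T]
    rw [show Finset.range m = Finset.range ((m - 1) + 1) from by congr 1; omega,
      Finset.sum_range_succ' (fun r => ((crec m (m * N + r) : ℕ) : ZMod m))]
    have hc0 : ((crec m (m * N + 0) : ℕ) : ZMod m) = T m N := by
      rw [Nat.add_zero]
      exact cast_crec_mul m N hm hN
    have hcr : ∀ r ∈ Finset.range (m - 1), ((crec m (m * N + (r + 1)) : ℕ) : ZMod m)
        = T m (N + 1) := by
      intro r hr
      simp only [Finset.mem_range] at hr
      have h : m * N + (r + 1) = (m * N + r) + 1 := by omega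
      rw [h, cast_crec_succ]
      congr 2
      rw [Nat.mul_add_div (by omega : 0 < m), Nat.div_eq_of_lt (by omega)]
      omega
    rw [Finset.sum_congr rfl hcr, Finset.sum_const, Finset.card_range, hc0, nsmul_eq_mul]
    have hm1 : ((m - 1 : ℕ) : ZMod m) = -1 := by
      rw [Nat.cast_sub (by omega : 1 ≤ m), ZMod.natCast_self]
      push_cast
      ring
    rw [ihN, hm1]
    ring

end CmAux

theorem cm_cube_congruence (m : ℕ) (hm : 2 ≤ m) (n : ℕ) :
    cm m (m ^ 3 * n) ≡ cm m (m * n) [MOD m] := by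
  rcases Nat.eq_zero_or_pos n with rfl | hn
  · simp [Nat.ModEq.refl]
  rw [← ZMod.natCast_eq_natCast_iff]
  rw [CmAux.cm_eq_crec m hm, CmAux.cm_eq_crec m hm]
  have h1 : m ^ 3 * n = m * (m * (m * n)) := by ring
  have hmn : 1 ≤ m * n := by
    calc 1 = 1 * 1 := by ring
    _ ≤ m * n := Nat.mul_le_mul (by omega) hn
  have hmmn : 1 ≤ m * (m * n) := by
    calc 1 = 1 * 1 := by ring
    _ ≤ m * (m * n) := Nat.mul_le_mul (by omega) hmn
  rw [h1, CmAux.cast_crec_mul m (m * (m * n)) hm hmmn, CmAux.cast_crec_mul m n hm hn]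
  rw [CmAux.T_key m hm (m * n) hmn, CmAux.T_key m hm n hn]
  ring
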